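/- Let c > 0, δ ≥ 0, T > 0 and n₁, n₂, n₃ be natural numbers. Let 𝐌 (real n₂×n₂) and G (real n₃×n₃) be symmetric positive definite matrices, and let B (n₂×n₁), E (n₂×n₃), S (n₁×n₁), F (n₁×n₃) be arbitrary real matrices. Let N : [0,T] → (real n₁×n₁ matrices) be continuous with N(t) invertible for every t ∈ [0,T], let Φ : [0,T] → ℝ^{n₁} be continuous, and let Γ : [0,T] → ℝ^{n₂} be continuously differentiable. Then for every Ψ⁰, Ψ¹ ∈ ℝ^{n₁} there exists a unique triple (Ψ, V, Λ) with Ψ ∈ C²([0,T]; ℝ^{n₁}), V ∈ C¹([0,T]; ℝ^{n₂}), Λ ∈ C¹([0,T]; ℝ^{n₃}) such that for all t ∈ [0,T]: 𝐌 V(t) + B Ψ(t) + E Λ(t) = Γ(t); N(t) Ψ''(t) − c² Bᵀ (V(t) + (δ/c²) V'(t)) + c² S (Ψ(t) + (δ/c²) Ψ'(t)) + c² F (Λ(t) + (δ/c²) Λ'(t)) = Φ(t); −Eᵀ V(t) + Fᵀ Ψ(t) + G Λ(t) = 0; and Ψ(0) = Ψ⁰, Ψ'(0) = Ψ¹. 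-/

import Mathlib

open Set Matrix

noncomputable section


variable {W : Type*} [NormedAddCommGroup W] [NormedSpace ℝ W] [CompleteSpace W]

lemma local_linear_ode (A : ℝ → W →L[ℝ] W) (b : ℝ → W) (hA : Continuous A) (hb : Continuous b)
    (K m : ℝ) (hK : ∀ t, ‖A t‖ ≤ K) (hm : ∀ t, ‖b t‖ ≤ m)
    (a β : ℝ) (hab : a ≤ β) (hsmall : K * (β - a) ≤ 1/2) (x₀ : W) :
    ∃ f : ℝ → W, f a = x₀ ∧ ∀ t ∈ Icc a β, HasDerivWithinAt f (A t (f t) + b t) (Icc a β) t := by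
  have hK0 : 0 ≤ K := le_trans (norm_nonneg _) (hK 0)
  have hm0 : 0 ≤ m := le_trans (norm_nonneg _) (hm 0)
  have hba : 0 ≤ β - a := by linarith
  set R : ℝ := 2 * ((K * ‖x₀‖ + m) * (β - a)) with hR
  have hR0 : 0 ≤ R := by positivity
  have hpl : IsPicardLindelof (fun t x => A t x + b t) (⟨a, le_rfl, hab⟩ : Icc a β) x₀ ⟨R, hR0⟩ 0
      ⟨K * (‖x₀‖ + R) + m, add_nonneg (mul_nonneg hK0 (by positivity)) hm0⟩ ⟨K, hK0⟩ := by
    constructor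
    · intro t _
      refine LipschitzWith.lipschitzOnWith (LipschitzWith.of_dist_le_mul fun x y => ?_)
      have h1 : dist (A t x + b t) (A t y + b t) = dist (A t x) (A t y) := dist_add_right _ _ _
      rw [h1]
      calc dist (A t x) (A t y) ≤ ‖A t‖ * dist x y := by
            simpa using (A t).lipschitz.dist_le_mul x y
        _ ≤ K * dist x y := by
            have := hK t
            nlinarith [dist_nonneg (x := x) (y := y)]
    · intro x _
      exact ((hA.clm_apply continuous_const).add hb).continuousOn
    · intro t _ x hx
      have hxn : ‖x‖ ≤ ‖x₀‖ + R := by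
        have := mem_closedBall_iff_norm.1 hx
        change ‖x - x₀‖ ≤ R at this
        calc ‖x‖ ≤ ‖x₀‖ + ‖x - x₀‖ := norm_le_insert' x x₀
        _ ≤ ‖x₀‖ + R := by linarith
      calc ‖A t x + b t‖ ≤ ‖A t x‖ + ‖b t‖ := norm_add_le _ _
        _ ≤ ‖A t‖ * ‖x‖ + m := add_le_add ((A t).le_opNorm x) (hm t)
        _ ≤ K * (‖x₀‖ + R) + m := by
            have := hK t
            nlinarith [norm_nonneg x, norm_nonneg (A t)]
    · simp only [tsub_zero, NNReal.coe_mk]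
      show (K * (‖x₀‖ + R) + m) * max (β - a) (a - a) ≤ R - ((0 : NNReal) : ℝ)
      rw [NNReal.coe_zero, sub_zero]
      have hmax : max (β - a) (a - a) = β - a := by
        rw [max_eq_left]; linarith
      rw [hmax, hR]
      nlinarith [norm_nonneg x₀]
  exact hpl.exists_eq_forall_mem_Icc_hasDerivWithinAt₀

lemma glue_step (v : ℝ → W → W) {a cc β : ℝ} (hac : a ≤ cc) (hcb : cc ≤ β) {f g : ℝ → W}
    (hf : ∀ t ∈ Icc a cc, HasDerivWithinAt f (v t (f t)) (Icc a cc) t)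
    (hg : ∀ t ∈ Icc cc β, HasDerivWithinAt g (v t (g t)) (Icc cc β) t)
    (hfg : f cc = g cc) :
    ∃ F : ℝ → W, F a = f a ∧ ∀ t ∈ Icc a β, HasDerivWithinAt F (v t (F t)) (Icc a β) t := by
  classical
  set F : ℝ → W := fun t => if t ≤ cc then f t else g t with hFdef
  have hEf : EqOn F f (Icc a cc) := fun t ht => if_pos ht.2
  have hEg : EqOn F g (Icc cc β) := by
    intro t ht
    by_cases h : t ≤ cc
    · have : t = cc := le_antisymm h ht.1
      simp [F, h, this, hfg]
    · simp [F, h]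
  refine ⟨F, hEf ⟨le_rfl, hac⟩, fun t ht => ?_⟩
  rcases lt_trichotomy t cc with hlt | heq | hgt
  · have h2 : F t = f t := hEf ⟨ht.1, hlt.le⟩
    have h1 : HasDerivWithinAt F (v t (F t)) (Icc a cc) t := by
      rw [h2]; exact (hf t ⟨ht.1, hlt.le⟩).congr hEf h2
    refine h1.mono_of_mem_nhdsWithin ?_
    rw [mem_nhdsWithin]
    exact ⟨Iio cc, isOpen_Iio, hlt, fun x hx => ⟨hx.2.1, hx.1.le⟩⟩
  · subst heq
    have hFc : F t = f t := hEf ⟨ht.1, le_rfl⟩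
    have h1 : HasDerivWithinAt F (v t (F t)) (Icc a t) t := by
      rw [hFc]; exact (hf t ⟨ht.1, le_rfl⟩).congr hEf hFc
    have h2 : HasDerivWithinAt F (v t (F t)) (Icc t β) t := by
      rw [hFc, hfg]; exact (hg t ⟨le_rfl, ht.2⟩).congr hEg (hEg ⟨le_rfl, ht.2⟩)

    have := h1.union h2
    rwa [Icc_union_Icc_eq_Icc ht.1 ht.2] at this
  · have h2 : F t = g t := hEg ⟨hgt.le, ht.2⟩
    have h1 : HasDerivWithinAt F (v t (F t)) (Icc cc β) t := by
      rw [h2]; exact (hg t ⟨hgt.le, ht.2⟩).congr hEg h2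
    refine h1.mono_of_mem_nhdsWithin ?_
    rw [mem_nhdsWithin]
    exact ⟨Ioi cc, isOpen_Ioi, hgt, fun x hx => ⟨hx.1.le, hx.2.2⟩⟩

lemma global_linear_ode (T : ℝ) (hT : 0 ≤ T)
    (A : ℝ → W →L[ℝ] W) (b : ℝ → W) (hA : Continuous A) (hb : Continuous b)
    (K m : ℝ) (hK : ∀ t, ‖A t‖ ≤ K) (hm : ∀ t, ‖b t‖ ≤ m) (x₀ : W) :
    ∃ f : ℝ → W, f 0 = x₀ ∧ ∀ t ∈ Icc 0 T, HasDerivWithinAt f (A t (f t) + b t) (Icc 0 T) t := by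
  have hK0 : 0 ≤ K := le_trans (norm_nonneg _) (hK 0)
  set n : ℕ := max 1 ⌈2 * K * T⌉₊ with hn
  have hn1 : 1 ≤ n := le_max_left _ _
  have hnpos : (0:ℝ) < n := by exact_mod_cast hn1
  set h : ℝ := T / n with hh
  have hh0 : 0 ≤ h := div_nonneg hT hnpos.le
  have hKh : K * h ≤ 1 / 2 := by
    have h2 : 2 * K * T ≤ n := le_trans (Nat.le_ceil _) (by exact_mod_cast le_max_right 1 ⌈2 * K * T⌉₊)
    rw [hh, mul_div_assoc']
    rw [div_le_iff₀ hnpos]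
    linarith
  have key : ∀ k : ℕ, ∃ f : ℝ → W, f 0 = x₀ ∧
      ∀ t ∈ Icc 0 ((k:ℝ) * h), HasDerivWithinAt f (A t (f t) + b t) (Icc 0 ((k:ℝ) * h)) t := by
    intro k
    induction k with
    | zero =>
      obtain ⟨f, hf0, hf⟩ := local_linear_ode A b hA hb K m hK hm 0 0 le_rfl (by norm_num) x₀
      exact ⟨f, hf0, by simpa using hf⟩
    | succ k ih =>
      obtain ⟨f, hf0, hf⟩ := ih
      have hk1 : ((k:ℝ)) * h ≤ ((k+1:ℕ):ℝ) * h := by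
        push_cast; nlinarith
      have hk0 : (0:ℝ) ≤ (k:ℝ) * h := by positivity
      obtain ⟨g, hg0, hg⟩ := local_linear_ode A b hA hb K m hK hm ((k:ℝ) * h) (((k+1:ℕ):ℝ) * h)
        hk1 (by
          have hd : ((k+1:ℕ):ℝ) * h - (k:ℝ) * h = h := by push_cast; ring
          rw [hd]; exact hKh) (f ((k:ℝ) * h))
      obtain ⟨F, hF0, hF⟩ := glue_step (fun t x => A t x + b t) hk0 hk1 hf hg hg0.symm
      exact ⟨F, by rw [hF0, hf0], hF⟩
  obtain ⟨f, hf0, hf⟩ := key n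
  have hnh : (n:ℝ) * h = T := by
    rw [hh]; field_simp
  rw [hnh] at hf
  exact ⟨f, hf0, hf⟩

lemma linear_ode_unique (T : ℝ)
    (A : ℝ → W →L[ℝ] W) (b : ℝ → W) (K : ℝ) (hK : ∀ t, ‖A t‖ ≤ K)
    (f g : ℝ → W)
    (hf : ∀ t ∈ Icc 0 T, HasDerivWithinAt f (A t (f t) + b t) (Icc 0 T) t)
    (hg : ∀ t ∈ Icc 0 T, HasDerivWithinAt g (A t (g t) + b t) (Icc 0 T) t)
    (h0 : f 0 = g 0) : EqOn f g (Icc 0 T) := by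
  have hK0 : 0 ≤ K := le_trans (norm_nonneg _) (hK 0)
  have hlip : ∀ t, LipschitzWith ⟨K, hK0⟩ (fun x => A t x + b t) := by
    intro t
    refine LipschitzWith.of_dist_le_mul fun x y => ?_
    have h1 : dist (A t x + b t) (A t y + b t) = dist (A t x) (A t y) := dist_add_right _ _ _
    rw [h1]
    calc dist (A t x) (A t y) ≤ ‖A t‖ * dist x y := by
          simpa using (A t).lipschitz.dist_le_mul x y
      _ ≤ K * dist x y := by
          have := hK t
          nlinarith [dist_nonneg (x := x) (y := y)]
  have hmem : ∀ t ∈ Ico (0:ℝ) T, Icc (0:ℝ) T ∈ nhdsWithin t (Ici t) := by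
    intro t ht
    rw [mem_nhdsWithin]
    exact ⟨Iio T, isOpen_Iio, ht.2, fun x hx => ⟨le_trans ht.1 hx.2, hx.1.le⟩⟩
  have hlip' : ∀ t, LipschitzOnWith ⟨K, hK0⟩ (fun x => A t x + b t) univ :=
    fun t => (hlip t).lipschitzOnWith
  exact ODE_solution_unique_of_mem_Icc_right (v := fun t x => A t x + b t)
    (s := fun _ => univ) (fun t _ => hlip' t)
    (fun t ht => (hf t ht).continuousWithinAt)
    (fun t ht => (hf t (Ico_subset_Icc_self ht)).mono_of_mem_nhdsWithin (hmem t ht))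
    (fun t _ => mem_univ _)
    (fun t ht => (hg t ht).continuousWithinAt)
    (fun t ht => (hg t (Ico_subset_Icc_self ht)).mono_of_mem_nhdsWithin (hmem t ht))
    (fun t _ => mem_univ _) h0

open Matrix

/-- `mulVec` as a continuous linear map. -/
def mvCLM {k l : ℕ} (X : Matrix (Fin k) (Fin l) ℝ) : (Fin l → ℝ) →L[ℝ] (Fin k → ℝ) :=
  LinearMap.toContinuousLinearMap X.mulVecLin

@[simp] lemma mvCLM_apply {k l : ℕ} (X : Matrix (Fin k) (Fin l) ℝ) (v : Fin l → ℝ) :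
    mvCLM X v = X.mulVec v := rfl

/-- `mvCLM` as a linear map in the matrix. -/
def mvCLML (k l : ℕ) : Matrix (Fin k) (Fin l) ℝ →ₗ[ℝ] ((Fin l → ℝ) →L[ℝ] (Fin k → ℝ)) where
  toFun := mvCLM
  map_add' X Y := by ext v i; simp [Matrix.add_mulVec]
  map_smul' a X := by ext v i; simp [Matrix.smul_mulVec]

lemma continuous_mvCLM (k l : ℕ) : Continuous (mvCLM : Matrix (Fin k) (Fin l) ℝ → _) :=
  (mvCLML k l).continuous_of_finiteDimensional

lemma exists_Uc {n₁ n₂ n₃ : ℕ}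
    (Mm : Matrix (Fin n₂) (Fin n₂) ℝ) (G : Matrix (Fin n₃) (Fin n₃) ℝ)
    (B : Matrix (Fin n₂) (Fin n₁) ℝ) (E : Matrix (Fin n₂) (Fin n₃) ℝ)
    (F : Matrix (Fin n₁) (Fin n₃) ℝ)
    (hMpos : ∀ x : Fin n₂ → ℝ, x ≠ 0 → 0 < x ⬝ᵥ Mm.mulVec x)
    (hGpos : ∀ x : Fin n₃ → ℝ, x ≠ 0 → 0 < x ⬝ᵥ G.mulVec x) :
    ∃ Uc : ((Fin n₁ → ℝ) × (Fin n₂ → ℝ)) →L[ℝ] ((Fin n₂ → ℝ) × (Fin n₃ → ℝ)),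
      (∀ p, Mm.mulVec (Uc p).1 + E.mulVec (Uc p).2 = p.2 - B.mulVec p.1) ∧
      (∀ p, -(Eᵀ.mulVec (Uc p).1) + G.mulVec (Uc p).2 = -(Fᵀ.mulVec p.1)) ∧
      (∀ (p : (Fin n₁ → ℝ) × (Fin n₂ → ℝ)) (v : Fin n₂ → ℝ) (lam : Fin n₃ → ℝ),
        Mm.mulVec v + E.mulVec lam = p.2 - B.mulVec p.1 →
        -(Eᵀ.mulVec v) + G.mulVec lam = -(Fᵀ.mulVec p.1) → (v, lam) = Uc p) := by
  classical
  set L : ((Fin n₂ → ℝ) × (Fin n₃ → ℝ)) →ₗ[ℝ] ((Fin n₂ → ℝ) × (Fin n₃ → ℝ)) :=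
    { toFun := fun q => (Mm.mulVec q.1 + E.mulVec q.2, -(Eᵀ.mulVec q.1) + G.mulVec q.2)
      map_add' := by
        intro p q
        simp only [Matrix.mulVec_add, Prod.fst_add, Prod.snd_add, Prod.mk_add_mk, Prod.mk.injEq]
        constructor <;> abel
      map_smul' := by
        intro a p
        simp only [Matrix.mulVec_smul, Prod.smul_fst, Prod.smul_snd, RingHom.id_apply,
          Prod.smul_mk, Prod.mk.injEq, smul_add, smul_neg]
        try constructor <;> abel } with hL
  have hM0 : ∀ v : Fin n₂ → ℝ, 0 ≤ v ⬝ᵥ Mm.mulVec v := by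
    intro v
    by_cases hv : v = 0
    · simp [hv]
    · exact (hMpos v hv).le
  have hG0 : ∀ v : Fin n₃ → ℝ, 0 ≤ v ⬝ᵥ G.mulVec v := by
    intro v
    by_cases hv : v = 0
    · simp [hv]
    · exact (hGpos v hv).le
  have hkey : ∀ (v : Fin n₂ → ℝ) (lam : Fin n₃ → ℝ),
      v ⬝ᵥ E.mulVec lam = lam ⬝ᵥ Eᵀ.mulVec v := by
    intro v lam
    rw [Matrix.dotProduct_mulVec, ← Matrix.mulVec_transpose, dotProduct_comm]
  have hLinj : Function.Injective L := by
    rw [injective_iff_map_eq_zero]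
    intro q hq
    have h1 : Mm.mulVec q.1 + E.mulVec q.2 = 0 := congrArg Prod.fst hq
    have h2 : -(Eᵀ.mulVec q.1) + G.mulVec q.2 = 0 := congrArg Prod.snd hq
    have e1 : q.1 ⬝ᵥ (Mm.mulVec q.1 + E.mulVec q.2) = 0 := by rw [h1]; simp
    have e2 : q.2 ⬝ᵥ (-(Eᵀ.mulVec q.1) + G.mulVec q.2) = 0 := by rw [h2]; simp
    rw [dotProduct_add] at e1 e2
    rw [dotProduct_neg] at e2
    have hsum : q.1 ⬝ᵥ Mm.mulVec q.1 + q.2 ⬝ᵥ G.mulVec q.2 = 0 := by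
      have := hkey q.1 q.2
      linarith
    have hq1 : q.1 = 0 := by
      by_contra hne
      have := hMpos q.1 hne
      have := hG0 q.2
      linarith
    have hq2 : q.2 = 0 := by
      by_contra hne
      have := hGpos q.2 hne
      have := hM0 q.1
      linarith
    exact Prod.ext hq1 hq2
  have hLsurj : Function.Surjective L := (LinearMap.injective_iff_surjective).1 hLinj
  set Le : ((Fin n₂ → ℝ) × (Fin n₃ → ℝ)) ≃ₗ[ℝ] ((Fin n₂ → ℝ) × (Fin n₃ → ℝ)) :=
    LinearEquiv.ofBijective L ⟨hLinj, hLsurj⟩ with hLe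
  set pre : ((Fin n₁ → ℝ) × (Fin n₂ → ℝ)) →ₗ[ℝ] ((Fin n₂ → ℝ) × (Fin n₃ → ℝ)) :=
    { toFun := fun p => (p.2 - B.mulVec p.1, -(Fᵀ.mulVec p.1))
      map_add' := by
        intro p q
        simp only [Matrix.mulVec_add, Prod.fst_add, Prod.snd_add, Prod.mk_add_mk, Prod.mk.injEq]
        constructor <;> abel
      map_smul' := by
        intro a p
        simp only [Matrix.mulVec_smul, Prod.smul_fst, Prod.smul_snd, RingHom.id_apply,
          Prod.smul_mk, Prod.mk.injEq, smul_sub, smul_neg]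
        try constructor <;> abel } with hpre
  refine ⟨LinearMap.toContinuousLinearMap ((Le.symm : _ →ₗ[ℝ] _).comp pre), ?_, ?_, ?_⟩
  · intro p
    have : L (Le.symm (pre p)) = pre p := Le.apply_symm_apply (pre p)
    have h1 := congrArg Prod.fst this
    simpa [hL, hpre] using h1
  · intro p
    have : L (Le.symm (pre p)) = pre p := Le.apply_symm_apply (pre p)
    have h2 := congrArg Prod.snd this
    simpa [hL, hpre] using h2
  · intro p v lam h1 h2
    have : L (v, lam) = pre p := by
      simp only [hL, LinearMap.coe_mk, AddHom.coe_mk, hpre]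
      exact Prod.ext h1 h2
    have := congrArg Le.symm this
    rw [show Le.symm (L (v, lam)) = (v, lam) from Le.symm_apply_apply (v, lam)] at this
    simpa using this

lemma exists_forall_norm_le {X : Type*} [NormedAddCommGroup X] {a b : ℝ} (hab : a ≤ b)
    (f : ℝ → X) (hf : Continuous f)
    (hper : ∀ t, f t = f (projIcc a b hab t)) : ∃ K, ∀ t, ‖f t‖ ≤ K := by
  obtain ⟨K, hK⟩ := ((isCompact_Icc.image_of_continuousOn hf.continuousOn)).isBounded.exists_norm_le
  refine ⟨K, fun t => ?_⟩
  rw [hper t]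
  exact hK _ ⟨_, (projIcc a b hab t).2, rfl⟩


/-- The triple `(Ψ, V, Λ)` solves, on `[0,T]`, the ODE system coming from the linearized
semidiscrete HDG formulation, with the prescribed initial conditions. -/
def SolvesHDGODE (c δ T : ℝ) {n₁ n₂ n₃ : ℕ}
    (Mm : Matrix (Fin n₂) (Fin n₂) ℝ) (G : Matrix (Fin n₃) (Fin n₃) ℝ)
    (B : Matrix (Fin n₂) (Fin n₁) ℝ) (E : Matrix (Fin n₂) (Fin n₃) ℝ)
    (S : Matrix (Fin n₁) (Fin n₁) ℝ) (F : Matrix (Fin n₁) (Fin n₃) ℝ)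
    (N : ℝ → Matrix (Fin n₁) (Fin n₁) ℝ)
    (Φ : ℝ → Fin n₁ → ℝ) (Γ : ℝ → Fin n₂ → ℝ)
    (Ψ0 Ψ1 : Fin n₁ → ℝ)
    (Ψ : ℝ → Fin n₁ → ℝ) (V : ℝ → Fin n₂ → ℝ) (Λ : ℝ → Fin n₃ → ℝ) : Prop :=
  ContDiffOn ℝ 2 Ψ (Icc 0 T) ∧ ContDiffOn ℝ 1 V (Icc 0 T) ∧ ContDiffOn ℝ 1 Λ (Icc 0 T) ∧
  (∀ t ∈ Icc (0:ℝ) T,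
    Mm.mulVec (V t) + B.mulVec (Ψ t) + E.mulVec (Λ t) = Γ t ∧
    (N t).mulVec (derivWithin (derivWithin Ψ (Icc 0 T)) (Icc 0 T) t)
        - c^2 • Bᵀ.mulVec (V t + (δ/c^2) • derivWithin V (Icc 0 T) t)
        + c^2 • S.mulVec (Ψ t + (δ/c^2) • derivWithin Ψ (Icc 0 T) t)
        + c^2 • F.mulVec (Λ t + (δ/c^2) • derivWithin Λ (Icc 0 T) t) = Φ t ∧
    -(Eᵀ.mulVec (V t)) + Fᵀ.mulVec (Ψ t) + G.mulVec (Λ t) = 0) ∧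
  Ψ 0 = Ψ0 ∧ derivWithin Ψ (Icc 0 T) 0 = Ψ1

/-- Existence and uniqueness of the solution to the ODE system coming from the linearized
semidiscrete HDG formulation. -/
theorem stmt_1 (c δ T : ℝ) (hc : 0 < c) (hδ : 0 ≤ δ) (hT : 0 < T)
    (n₁ n₂ n₃ : ℕ)
    (Mm : Matrix (Fin n₂) (Fin n₂) ℝ) (G : Matrix (Fin n₃) (Fin n₃) ℝ)
    (B : Matrix (Fin n₂) (Fin n₁) ℝ) (E : Matrix (Fin n₂) (Fin n₃) ℝ)
    (S : Matrix (Fin n₁) (Fin n₁) ℝ) (F : Matrix (Fin n₁) (Fin n₃) ℝ)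
    (hMsymm : Mm.IsSymm) (hMpos : ∀ x : Fin n₂ → ℝ, x ≠ 0 → 0 < x ⬝ᵥ Mm.mulVec x)
    (hGsymm : G.IsSymm) (hGpos : ∀ x : Fin n₃ → ℝ, x ≠ 0 → 0 < x ⬝ᵥ G.mulVec x)
    (N : ℝ → Matrix (Fin n₁) (Fin n₁) ℝ)
    (hNcont : ContinuousOn N (Icc 0 T))
    (hNinv : ∀ t ∈ Icc (0:ℝ) T, IsUnit (N t))
    (Φ : ℝ → Fin n₁ → ℝ) (hΦ : ContinuousOn Φ (Icc 0 T))
    (Γ : ℝ → Fin n₂ → ℝ) (hΓ : ContDiffOn ℝ 1 Γ (Icc 0 T))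
    (Ψ0 Ψ1 : Fin n₁ → ℝ) :
    ∃ (Ψ : ℝ → Fin n₁ → ℝ) (V : ℝ → Fin n₂ → ℝ) (Λ : ℝ → Fin n₃ → ℝ),
      SolvesHDGODE c δ T Mm G B E S F N Φ Γ Ψ0 Ψ1 Ψ V Λ ∧
      ∀ (Ψ' : ℝ → Fin n₁ → ℝ) (V' : ℝ → Fin n₂ → ℝ) (Λ' : ℝ → Fin n₃ → ℝ),
        SolvesHDGODE c δ T Mm G B E S F N Φ Γ Ψ0 Ψ1 Ψ' V' Λ' →
        ∀ t ∈ Icc (0:ℝ) T, Ψ' t = Ψ t ∧ V' t = V t ∧ Λ' t = Λ t := by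
  classical
  classical
  obtain ⟨Uc, hU1, hU2, hUuniq⟩ := exists_Uc Mm G B E F hMpos hGpos
  have hUD : UniqueDiffOn ℝ (Icc (0:ℝ) T) := uniqueDiffOn_Icc hT
  set π : ℝ → ℝ := fun t => (projIcc (0:ℝ) T hT.le t : ℝ) with hπ
  have hπcont : Continuous π := continuous_subtype_val.comp continuous_projIcc
  have hπmem : ∀ t, π t ∈ Icc (0:ℝ) T := fun t => (projIcc (0:ℝ) T hT.le t).2
  have hπid : ∀ t ∈ Icc (0:ℝ) T, π t = t := fun t ht => by
    rw [hπ]; simp [projIcc_of_mem hT.le ht]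
  have hππ : ∀ t, π (π t) = π t := fun t => hπid _ (hπmem t)
  set Γd : ℝ → Fin n₂ → ℝ := derivWithin Γ (Icc 0 T) with hΓdd
  have hΓdcont : ContinuousOn Γd (Icc 0 T) := hΓ.continuousOn_derivWithin hUD le_rfl
  set Nc : ℝ → Matrix (Fin n₁) (Fin n₁) ℝ := fun t => N (π t) with hNc
  have hNccont : Continuous Nc := hNcont.comp_continuous hπcont hπmem
  have hNcu : ∀ t, IsUnit (Nc t) := fun t => hNinv _ (hπmem t)
  have hNcdet : ∀ t, IsUnit (Nc t).det := fun t => (Matrix.isUnit_iff_isUnit_det _).1 (hNcu t)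
  set Ninv : ℝ → Matrix (Fin n₁) (Fin n₁) ℝ := fun t => (Nc t)⁻¹ with hNinvdef
  have hNinveq : Ninv = fun t => ((Nc t).det)⁻¹ • (Nc t).adjugate := by
    funext t
    show (Nc t)⁻¹ = _
    rw [Matrix.inv_def, Ring.inverse_eq_inv']
  have hNinvcont : Continuous Ninv := by
    rw [hNinveq]
    exact (hNccont.matrix_det.inv₀ fun t => (hNcdet t).ne_zero).smul hNccont.matrix_adjugate
  set Γc : ℝ → Fin n₂ → ℝ := fun t => Γ (π t) with hΓc
  have hΓccont : Continuous Γc := hΓ.continuousOn.comp_continuous hπcont hπmem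
  set Γdc : ℝ → Fin n₂ → ℝ := fun t => Γd (π t) with hΓdc
  have hΓdccont : Continuous Γdc := hΓdcont.comp_continuous hπcont hπmem
  set Φc : ℝ → Fin n₁ → ℝ := fun t => Φ (π t) with hΦc
  have hΦccont : Continuous Φc := hΦ.comp_continuous hπcont hπmem
  set dd : ℝ := δ / c^2 with hdd
  set RHS : (Fin n₁ → ℝ) → (Fin n₁ → ℝ) → (Fin n₂ → ℝ) → (Fin n₂ → ℝ) → (Fin n₁ → ℝ) →
      (Fin n₁ → ℝ) := fun ψ φ γ γd r =>
    r + c^2 • Bᵀ.mulVec ((Uc (ψ, γ)).1 + dd • (Uc (φ, γd)).1)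
      - c^2 • S.mulVec (ψ + dd • φ)
      - c^2 • F.mulVec ((Uc (ψ, γ)).2 + dd • (Uc (φ, γd)).2) with hRHS
  -- continuous linear maps
  set fst1 : ((Fin n₁ → ℝ) × (Fin n₁ → ℝ)) →L[ℝ] (Fin n₁ → ℝ) :=
    ContinuousLinearMap.fst ℝ _ _ with hfst1
  set snd1 : ((Fin n₁ → ℝ) × (Fin n₁ → ℝ)) →L[ℝ] (Fin n₁ → ℝ) :=
    ContinuousLinearMap.snd ℝ _ _ with hsnd1
  set P1 : (Fin n₁ → ℝ) →L[ℝ] (Fin n₂ → ℝ) :=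
    (ContinuousLinearMap.fst ℝ _ _).comp (Uc.comp (ContinuousLinearMap.inl ℝ _ _)) with hP1
  set P2 : (Fin n₁ → ℝ) →L[ℝ] (Fin n₃ → ℝ) :=
    (ContinuousLinearMap.snd ℝ _ _).comp (Uc.comp (ContinuousLinearMap.inl ℝ _ _)) with hP2
  set Jc : ((Fin n₁ → ℝ) × (Fin n₁ → ℝ)) →L[ℝ] (Fin n₁ → ℝ) :=
    c^2 • (mvCLM Bᵀ).comp (P1.comp fst1 + dd • P1.comp snd1)
      - c^2 • (mvCLM S).comp (fst1 + dd • snd1)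
      - c^2 • (mvCLM F).comp (P2.comp fst1 + dd • P2.comp snd1) with hJcdef
  have hJc : ∀ x : (Fin n₁ → ℝ) × (Fin n₁ → ℝ), Jc x = RHS x.1 x.2 0 0 0 := by
    intro x
    simp [hJcdef, hRHS, hP1, hP2, hfst1, hsnd1, Matrix.mulVec_add, Matrix.mulVec_smul, smul_add]
  set Θ : Matrix (Fin n₁) (Fin n₁) ℝ →ₗ[ℝ]
      (((Fin n₁ → ℝ) × (Fin n₁ → ℝ)) →L[ℝ] ((Fin n₁ → ℝ) × (Fin n₁ → ℝ))) :=
    { toFun := fun X => (0 : ((Fin n₁ → ℝ) × (Fin n₁ → ℝ)) →L[ℝ] (Fin n₁ → ℝ)).prod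
        ((mvCLM X).comp Jc)
      map_add' := by
        intro X Y
        refine ContinuousLinearMap.ext fun x => Prod.ext ?_ ?_
        · simp
        · simp [Matrix.add_mulVec]
      map_smul' := by
        intro a X
        refine ContinuousLinearMap.ext fun x => Prod.ext ?_ ?_
        · simp
        · simp [Matrix.smul_mulVec] } with hΘ
  set AA : ℝ → (((Fin n₁ → ℝ) × (Fin n₁ → ℝ)) →L[ℝ] ((Fin n₁ → ℝ) × (Fin n₁ → ℝ))) :=
    fun t => snd1.prod 0 + Θ (Ninv t) with hAA
  have hAAcont : Continuous AA :=
    continuous_const.add (Θ.continuous_of_finiteDimensional.comp hNinvcont)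
  set bb : ℝ → (Fin n₁ → ℝ) × (Fin n₁ → ℝ) :=
    fun t => (0, (Ninv t).mulVec (RHS 0 0 (Γc t) (Γdc t) (Φc t))) with hbb
  have hRHScont : Continuous fun t => RHS 0 0 (Γc t) (Γdc t) (Φc t) := by
    rw [hRHS]
    beta_reduce
    refine ((hΦccont.add ((continuous_const (y := c^2)).smul ?_)).sub continuous_const).sub
      ((continuous_const (y := c^2)).smul ?_)
    · exact ((continuous_mvCLM n₁ n₂).comp continuous_const).clm_apply
        ((continuous_fst.comp (Uc.continuous.comp (continuous_const.prodMk hΓccont))).add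
          ((continuous_const (y := dd)).smul
            (continuous_fst.comp (Uc.continuous.comp (continuous_const.prodMk hΓdccont)))))
    · exact ((continuous_mvCLM n₁ n₃).comp continuous_const).clm_apply
        ((continuous_snd.comp (Uc.continuous.comp (continuous_const.prodMk hΓccont))).add
          ((continuous_const (y := dd)).smul
            (continuous_snd.comp (Uc.continuous.comp (continuous_const.prodMk hΓdccont)))))
  have hbbcont : Continuous bb := by
    rw [hbb]
    exact continuous_const.prodMk
      (((continuous_mvCLM n₁ n₁).comp hNinvcont).clm_apply hRHScont)
  have hUcadd : ∀ (x : Fin n₁ → ℝ) (y : Fin n₂ → ℝ), Uc (x, y) = Uc (x, 0) + Uc (0, y) := by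
    intro x y
    rw [← map_add]
    congr 1
    simp
  have hsplit : ∀ ψ φ γ γd r, RHS ψ φ γ γd r = RHS ψ φ 0 0 0 + RHS 0 0 γ γd r := by
    intro ψ φ γ γd r
    simp only [hRHS]
    rw [hUcadd ψ γ, hUcadd φ γd]
    simp only [Prod.fst_add, Prod.snd_add, Matrix.mulVec_add, Matrix.mulVec_smul,
      smul_add, Matrix.mulVec_zero, smul_zero, add_zero, zero_add]
    module
  have hfield : ∀ t (x : (Fin n₁ → ℝ) × (Fin n₁ → ℝ)), AA t x + bb t =
      (x.2, (Ninv t).mulVec (RHS x.1 x.2 (Γc t) (Γdc t) (Φc t))) := by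
    intro t x
    have hs := hsplit x.1 x.2 (Γc t) (Γdc t) (Φc t)
    apply Prod.ext
    · simp [hAA, hΘ, hsnd1, hbb]
    · simp only [hAA, hΘ, Prod.snd_add, hbb]
      simp [hJc x, hs, Matrix.mulVec_add, hsnd1]
  -- bounds
  have hNinvπ : ∀ t, Ninv (π t) = Ninv t := fun t => by
    rw [hNinvdef]; simp only [hNc, hππ]
  obtain ⟨KA, hKA⟩ := exists_forall_norm_le hT.le AA hAAcont (fun t => by
    show AA t = AA (π t)
    rw [hAA]
    simp only [hNinvπ])
  obtain ⟨Kb, hKb⟩ := exists_forall_norm_le hT.le bb hbbcont (fun t => by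
    show bb t = bb (π t)
    rw [hbb]
    simp only [hNinvπ, hΓc, hΓdc, hΦc, hππ])
  -- existence
  obtain ⟨f, hf0, hf⟩ := global_linear_ode T hT.le AA bb hAAcont hbbcont KA Kb hKA hKb (Ψ0, Ψ1)
  set Ψ : ℝ → Fin n₁ → ℝ := fun t => (f t).1 with hΨdef
  set Φf : ℝ → Fin n₁ → ℝ := fun t => (f t).2 with hΦfdef
  set D : ℝ → Fin n₁ → ℝ :=
    fun t => (Ninv t).mulVec (RHS (Ψ t) (Φf t) (Γc t) (Γdc t) (Φc t)) with hD
  have hf' : ∀ t ∈ Icc (0:ℝ) T, HasDerivWithinAt f (Φf t, D t) (Icc 0 T) t := by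
    intro t ht
    have := hf t ht
    rwa [hfield t (f t)] at this
  have hΨ' : ∀ t ∈ Icc (0:ℝ) T, HasDerivWithinAt Ψ (Φf t) (Icc 0 T) t := by
    intro t ht
    have := (ContinuousLinearMap.fst ℝ (Fin n₁ → ℝ) (Fin n₁ → ℝ)).hasFDerivAt.comp_hasDerivWithinAt
      t (hf' t ht)
    simpa [Function.comp_def, hΨdef] using this
  have hΦf' : ∀ t ∈ Icc (0:ℝ) T, HasDerivWithinAt Φf (D t) (Icc 0 T) t := by
    intro t ht
    have := (ContinuousLinearMap.snd ℝ (Fin n₁ → ℝ) (Fin n₁ → ℝ)).hasFDerivAt.comp_hasDerivWithinAt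
      t (hf' t ht)
    simpa [Function.comp_def, hΦfdef] using this
  have hfc : ContinuousOn f (Icc 0 T) := fun t ht => (hf t ht).continuousWithinAt
  have hdΨ : ∀ t ∈ Icc (0:ℝ) T, derivWithin Ψ (Icc 0 T) t = Φf t :=
    fun t ht => (hΨ' t ht).derivWithin (hUD t ht)
  have hdΦf : ∀ t ∈ Icc (0:ℝ) T, derivWithin Φf (Icc 0 T) t = D t :=
    fun t ht => (hΦf' t ht).derivWithin (hUD t ht)
  have hΨdiff : DifferentiableOn ℝ Ψ (Icc 0 T) :=
    fun t ht => (hΨ' t ht).differentiableWithinAt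
  have hΦfdiff : DifferentiableOn ℝ Φf (Icc 0 T) :=
    fun t ht => (hΦf' t ht).differentiableWithinAt
  have hDcont : ContinuousOn D (Icc 0 T) := by
    have hD2 : D = fun t => (AA t (f t) + bb t).2 := funext fun t => by
      rw [hfield t (f t)]
    rw [hD2]
    exact ((hAAcont.continuousOn.clm_apply hfc).add hbbcont.continuousOn).snd
  have hΦfC1 : ContDiffOn ℝ 1 Φf (Icc 0 T) := by
    rw [show (1 : WithTop ℕ∞) = 0 + 1 from (zero_add 1).symm]
    refine (contDiffOn_succ_iff_derivWithin hUD).2 ⟨hΦfdiff, by simp, ?_⟩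
    rw [contDiffOn_zero]
    exact hDcont.congr hdΦf
  have hΨC2 : ContDiffOn ℝ 2 Ψ (Icc 0 T) := by
    rw [show (2 : WithTop ℕ∞) = 1 + 1 from by norm_num]
    refine (contDiffOn_succ_iff_derivWithin hUD).2 ⟨hΨdiff, by simp, ?_⟩
    exact hΦfC1.congr hdΨ
  set V : ℝ → Fin n₂ → ℝ := fun t => (Uc (Ψ t, Γ t)).1 with hV
  set Λ : ℝ → Fin n₃ → ℝ := fun t => (Uc (Ψ t, Γ t)).2 with hΛ
  have hΓpair : ContDiffOn ℝ 1 (fun t => (Ψ t, Γ t)) (Icc 0 T) :=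
    (hΨC2.of_le (by norm_num)).prodMk hΓ
  have hVC1 : ContDiffOn ℝ 1 V (Icc 0 T) := by
    have := ((ContinuousLinearMap.fst ℝ (Fin n₂ → ℝ) (Fin n₃ → ℝ)).comp
      Uc).contDiff.comp_contDiffOn hΓpair
    exact this.congr (fun t _ => by simp [hV])
  have hΛC1 : ContDiffOn ℝ 1 Λ (Icc 0 T) := by
    have := ((ContinuousLinearMap.snd ℝ (Fin n₂ → ℝ) (Fin n₃ → ℝ)).comp
      Uc).contDiff.comp_contDiffOn hΓpair
    exact this.congr (fun t _ => by simp [hΛ])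
  have hΓ' : ∀ t ∈ Icc (0:ℝ) T, HasDerivWithinAt Γ (Γd t) (Icc 0 T) t := by
    intro t ht
    exact (hΓ.differentiableOn one_ne_zero t ht).hasDerivWithinAt
  have hV' : ∀ t ∈ Icc (0:ℝ) T, HasDerivWithinAt V ((Uc (Φf t, Γd t)).1) (Icc 0 T) t := by
    intro t ht
    have hp : HasDerivWithinAt (fun t => (Ψ t, Γ t)) (Φf t, Γd t) (Icc 0 T) t :=
      (hΨ' t ht).prodMk (hΓ' t ht)
    have := ((ContinuousLinearMap.fst ℝ (Fin n₂ → ℝ) (Fin n₃ → ℝ)).comp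
      Uc).hasFDerivAt.comp_hasDerivWithinAt t hp
    simpa [Function.comp_def] using this
  have hΛ' : ∀ t ∈ Icc (0:ℝ) T, HasDerivWithinAt Λ ((Uc (Φf t, Γd t)).2) (Icc 0 T) t := by
    intro t ht
    have hp : HasDerivWithinAt (fun t => (Ψ t, Γ t)) (Φf t, Γd t) (Icc 0 T) t :=
      (hΨ' t ht).prodMk (hΓ' t ht)
    have := ((ContinuousLinearMap.snd ℝ (Fin n₂ → ℝ) (Fin n₃ → ℝ)).comp
      Uc).hasFDerivAt.comp_hasDerivWithinAt t hp
    simpa [Function.comp_def] using this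
  have hdV : ∀ t ∈ Icc (0:ℝ) T, derivWithin V (Icc 0 T) t = (Uc (Φf t, Γd t)).1 :=
    fun t ht => (hV' t ht).derivWithin (hUD t ht)
  have hdΛ : ∀ t ∈ Icc (0:ℝ) T, derivWithin Λ (Icc 0 T) t = (Uc (Φf t, Γd t)).2 :=
    fun t ht => (hΛ' t ht).derivWithin (hUD t ht)
  have hNmulNinv : ∀ t ∈ Icc (0:ℝ) T, ∀ z, (N t).mulVec ((Ninv t).mulVec z) = z := by
    intro t ht z
    have hNt : Nc t = N t := by rw [hNc]; simp [hπid t ht]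
    rw [hNinvdef]
    show (N t).mulVec ((Nc t)⁻¹.mulVec z) = z
    rw [Matrix.mulVec_mulVec, ← hNt, Matrix.mul_nonsing_inv _ (hNcdet t), Matrix.one_mulVec]
  have hzero : (0:ℝ) ∈ Icc (0:ℝ) T := ⟨le_rfl, hT.le⟩
  refine ⟨Ψ, V, Λ, ⟨hΨC2, hVC1, hΛC1, ?_, ?_, ?_⟩, ?_⟩
  · -- the three equations
    intro t ht
    have hΓct : Γc t = Γ t := by rw [hΓc]; simp [hπid t ht]
    have hΓdct : Γdc t = Γd t := by rw [hΓdc]; simp [hπid t ht]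
    have hΦct : Φc t = Φ t := by rw [hΦc]; simp [hπid t ht]
    refine ⟨?_, ?_, ?_⟩
    · have h := hU1 (Ψ t, Γ t)
      calc Mm.mulVec (V t) + B.mulVec (Ψ t) + E.mulVec (Λ t)
          = (Mm.mulVec ((Uc (Ψ t, Γ t)).1) + E.mulVec ((Uc (Ψ t, Γ t)).2)) + B.mulVec (Ψ t) := by
            rw [hV, hΛ]; abel
        _ = ((Ψ t, Γ t).2 - B.mulVec ((Ψ t, Γ t)).1) + B.mulVec (Ψ t) := by rw [h]
        _ = Γ t := by simp
    · -- second equation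
      have e2 : derivWithin (derivWithin Ψ (Icc 0 T)) (Icc 0 T) t = D t := by
        rw [derivWithin_congr hdΨ (hdΨ t ht)]
        exact hdΦf t ht
      have eND : (N t).mulVec (D t) = RHS (Ψ t) (Φf t) (Γ t) (Γd t) (Φ t) := by
        rw [hD]
        show (N t).mulVec ((Ninv t).mulVec _) = _
        rw [hNmulNinv t ht, hΓct, hΓdct, hΦct]
      rw [e2, ← hdd, hdΨ t ht, hdV t ht, hdΛ t ht]
      rw [show (N t).mulVec (D t) = _ from eND]
      rw [hRHS]
      simp only [hV, hΛ]
      abel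
    · have h := hU2 (Ψ t, Γ t)
      calc -(Eᵀ.mulVec (V t)) + Fᵀ.mulVec (Ψ t) + G.mulVec (Λ t)
          = (-(Eᵀ.mulVec ((Uc (Ψ t, Γ t)).1)) + G.mulVec ((Uc (Ψ t, Γ t)).2)) + Fᵀ.mulVec (Ψ t) := by
            rw [hV, hΛ]; abel
        _ = -(Fᵀ.mulVec ((Ψ t, Γ t)).1) + Fᵀ.mulVec (Ψ t) := by rw [h]
        _ = 0 := by simp
  · -- initial value
    show (f 0).1 = Ψ0
    rw [hf0]
  · -- initial derivative
    rw [hdΨ 0 hzero]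
    show (f 0).2 = Ψ1
    rw [hf0]
  · -- uniqueness
    rintro Ψ' V' Λ' ⟨hΨ'C2, hV'C1, hΛ'C1, heqs, hinit0, hinit1⟩
    have hValg : ∀ t ∈ Icc (0:ℝ) T, (V' t, Λ' t) = Uc (Ψ' t, Γ t) := by
      intro t ht
      refine hUuniq (Ψ' t, Γ t) (V' t) (Λ' t) ?_ ?_
      · have h := (heqs t ht).1
        show Mm.mulVec (V' t) + E.mulVec (Λ' t) = Γ t - B.mulVec (Ψ' t)
        rw [eq_sub_iff_add_eq, ← h]
        abel
      · have h := (heqs t ht).2.2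
        show -(Eᵀ.mulVec (V' t)) + G.mulVec (Λ' t) = -(Fᵀ.mulVec (Ψ' t))
        have h2 : -(Eᵀ.mulVec (V' t)) + G.mulVec (Λ' t)
            = (-(Eᵀ.mulVec (V' t)) + Fᵀ.mulVec (Ψ' t) + G.mulVec (Λ' t)) - Fᵀ.mulVec (Ψ' t) := by
          abel
        rw [h2, h]
        abel
    set dΨ' : ℝ → Fin n₁ → ℝ := derivWithin Ψ' (Icc 0 T) with hdΨ'def
    have hΨ'diff : DifferentiableOn ℝ Ψ' (Icc 0 T) := hΨ'C2.differentiableOn (by norm_num)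
    have hΨ'' : ∀ t ∈ Icc (0:ℝ) T, HasDerivWithinAt Ψ' (dΨ' t) (Icc 0 T) t :=
      fun t ht => (hΨ'diff t ht).hasDerivWithinAt
    have hdΨ'C1 : ContDiffOn ℝ 1 dΨ' (Icc 0 T) := by
      rw [hdΨ'def]
      exact hΨ'C2.derivWithin hUD (by norm_num)
    have hdΨ'diff : DifferentiableOn ℝ dΨ' (Icc 0 T) := hdΨ'C1.differentiableOn one_ne_zero
    have hV'eq : EqOn V' (fun t => (Uc (Ψ' t, Γ t)).1) (Icc 0 T) :=
      fun t ht => congrArg Prod.fst (hValg t ht)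
    have hΛ'eq : EqOn Λ' (fun t => (Uc (Ψ' t, Γ t)).2) (Icc 0 T) :=
      fun t ht => congrArg Prod.snd (hValg t ht)
    have hdV' : ∀ t ∈ Icc (0:ℝ) T, derivWithin V' (Icc 0 T) t = (Uc (dΨ' t, Γd t)).1 := by
      intro t ht
      rw [derivWithin_congr hV'eq (hV'eq ht)]
      have hp : HasDerivWithinAt (fun t => (Ψ' t, Γ t)) (dΨ' t, Γd t) (Icc 0 T) t :=
        (hΨ'' t ht).prodMk (hΓ' t ht)
      have := ((ContinuousLinearMap.fst ℝ (Fin n₂ → ℝ) (Fin n₃ → ℝ)).comp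
        Uc).hasFDerivAt.comp_hasDerivWithinAt t hp
      have h2 : HasDerivWithinAt (fun t => (Uc (Ψ' t, Γ t)).1) ((Uc (dΨ' t, Γd t)).1)
          (Icc 0 T) t := by simpa [Function.comp_def] using this
      exact h2.derivWithin (hUD t ht)
    have hdΛ' : ∀ t ∈ Icc (0:ℝ) T, derivWithin Λ' (Icc 0 T) t = (Uc (dΨ' t, Γd t)).2 := by
      intro t ht
      rw [derivWithin_congr hΛ'eq (hΛ'eq ht)]
      have hp : HasDerivWithinAt (fun t => (Ψ' t, Γ t)) (dΨ' t, Γd t) (Icc 0 T) t :=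
        (hΨ'' t ht).prodMk (hΓ' t ht)
      have := ((ContinuousLinearMap.snd ℝ (Fin n₂ → ℝ) (Fin n₃ → ℝ)).comp
        Uc).hasFDerivAt.comp_hasDerivWithinAt t hp
      have h2 : HasDerivWithinAt (fun t => (Uc (Ψ' t, Γ t)).2) ((Uc (dΨ' t, Γd t)).2)
          (Icc 0 T) t := by simpa [Function.comp_def] using this
      exact h2.derivWithin (hUD t ht)
    have hode2 : ∀ t ∈ Icc (0:ℝ) T, derivWithin dΨ' (Icc 0 T) t
        = (Ninv t).mulVec (RHS (Ψ' t) (dΨ' t) (Γc t) (Γdc t) (Φc t)) := by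
      intro t ht
      have hΓct : Γc t = Γ t := by rw [hΓc]; simp [hπid t ht]
      have hΓdct : Γdc t = Γd t := by rw [hΓdc]; simp [hπid t ht]
      have hΦct : Φc t = Φ t := by rw [hΦc]; simp [hπid t ht]
      have hNt : Nc t = N t := by rw [hNc]; simp [hπid t ht]
      have h2 := (heqs t ht).2.1
      have hkey : (N t).mulVec (derivWithin dΨ' (Icc 0 T) t)
          = RHS (Ψ' t) (dΨ' t) (Γ t) (Γd t) (Φ t) := by
        have hre : (N t).mulVec (derivWithin (derivWithin Ψ' (Icc 0 T)) (Icc 0 T) t)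
            = ((N t).mulVec (derivWithin (derivWithin Ψ' (Icc 0 T)) (Icc 0 T) t)
                - c^2 • Bᵀ.mulVec (V' t + (δ/c^2) • derivWithin V' (Icc 0 T) t)
                + c^2 • S.mulVec (Ψ' t + (δ/c^2) • derivWithin Ψ' (Icc 0 T) t)
                + c^2 • F.mulVec (Λ' t + (δ/c^2) • derivWithin Λ' (Icc 0 T) t))
              + c^2 • Bᵀ.mulVec (V' t + (δ/c^2) • derivWithin V' (Icc 0 T) t)
              - c^2 • S.mulVec (Ψ' t + (δ/c^2) • derivWithin Ψ' (Icc 0 T) t)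
              - c^2 • F.mulVec (Λ' t + (δ/c^2) • derivWithin Λ' (Icc 0 T) t) := by
          abel
        rw [h2] at hre
        rw [← hdΨ'def] at hre
        rw [hre, hRHS, ← hdd, hdV' t ht, hdΛ' t ht, hV'eq ht, hΛ'eq ht]
      have hback : derivWithin dΨ' (Icc 0 T) t
          = (Ninv t).mulVec ((N t).mulVec (derivWithin dΨ' (Icc 0 T) t)) := by
        rw [hNinvdef]
        show _ = (Nc t)⁻¹.mulVec ((N t).mulVec _)
        rw [Matrix.mulVec_mulVec, ← hNt, Matrix.nonsing_inv_mul _ (hNcdet t),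
          Matrix.one_mulVec]
      rw [hback, hkey, hΓct, hΓdct, hΦct]
    have hg : ∀ t ∈ Icc (0:ℝ) T, HasDerivWithinAt (fun t => (Ψ' t, dΨ' t))
        (AA t (Ψ' t, dΨ' t) + bb t) (Icc 0 T) t := by
      intro t ht
      rw [hfield t (Ψ' t, dΨ' t)]
      refine (hΨ'' t ht).prodMk ?_
      have := (hdΨ'diff t ht).hasDerivWithinAt
      rwa [hode2 t ht] at this
    have huniq := linear_ode_unique T AA bb KA hKA (fun t => (Ψ' t, dΨ' t)) f hg hf (by
      rw [hf0]
      have h1 : dΨ' 0 = Ψ1 := by rw [hdΨ'def]; exact hinit1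
      show (Ψ' 0, dΨ' 0) = (Ψ0, Ψ1)
      rw [hinit0, h1])
    intro t ht
    have hft := huniq ht
    have hΨeq : Ψ' t = Ψ t := congrArg Prod.fst hft
    refine ⟨hΨeq, ?_, ?_⟩
    · rw [show V' t = (Uc (Ψ' t, Γ t)).1 from hV'eq ht, hΨeq]
    · rw [show Λ' t = (Uc (Ψ' t, Γ t)).2 from hΛ'eq ht, hΨeq]
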